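/- Let d ∈ ℕ and let F : ℝ^d → ℝ ∪ {+∞} be diconvex, meaning there exists a proper convex function F̌ : ℝ^d × Sym_d(ℝ) → ℝ ∪ {+∞} on the product of ℝ^d with the space Sym_d(ℝ) of real symmetric d × d matrices such that F̌(u, u uᵀ) = F(u) for all u ∈ ℝ^d (u uᵀ denoting the outer product). Then F is lower semicontinuous if and only if there exists such a representative F̌ that is, in addition, lower semicontinuous. -/

import Mathlib

/-- The space `Sym_d(ℝ)` of real symmetric `d × d` matrices, as a submodule of the
matrix space. -/
def symMatrices (d : ℕ) : Submodule ℝ (Matrix (Fin d) (Fin d) ℝ) where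
  carrier := {M | M.IsSymm}
  add_mem' := fun hA hB => hA.add hB
  zero_mem' := Matrix.isSymm_zero
  smul_mem' := fun c _ hM => hM.smul c

/-- The outer product `u uᵀ` as an element of `Sym_d(ℝ)`. -/
def outerSym {d : ℕ} (u : Fin d → ℝ) : ↥(symMatrices d) :=
  ⟨Matrix.vecMulVec u u, by
    show (Matrix.vecMulVec u u).IsSymm
    ext i j
    simp [Matrix.vecMulVec_apply, Matrix.transpose_apply, mul_comm]⟩


section AffineMinorant

variable {V : Type*} [AddCommGroup V] [Module ℝ V] [TopologicalSpace V]
  [IsTopologicalAddGroup V] [ContinuousSMul ℝ V] [T2Space V] [FiniteDimensional ℝ V]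

set_option maxHeartbeats 1000000 in
theorem exists_affine_minorant (Fc : V → EReal) (hbot : ∀ p, Fc p ≠ ⊥)
    (hconv : ∀ p q : V, ∀ θ : ℝ, 0 ≤ θ → θ ≤ 1 →
        Fc (θ • p + (1 - θ) • q) ≤ (θ : EReal) * Fc p + ((1 - θ : ℝ) : EReal) * Fc q)
    (hproper : ∃ p, Fc p ≠ ⊤) :
    ∃ (ℓ : V →ₗ[ℝ] ℝ) (c : ℝ), ∀ p, ((ℓ p + c : ℝ) : EReal) ≤ Fc p := by
  classical
  obtain ⟨p₀, hp₀⟩ := hproper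
  set s : Set V := {p | Fc p ≠ ⊤} with hs_def
  set f : V → ℝ := fun p => (Fc p).toReal with hf_def
  have hcoe : ∀ p ∈ s, ((f p : ℝ) : EReal) = Fc p := fun p hp =>
    EReal.coe_toReal hp (hbot p)
  -- the key binary inequality, real form
  have key : ∀ p ∈ s, ∀ q ∈ s, ∀ a b : ℝ, 0 ≤ a → 0 ≤ b → a + b = 1 →
      Fc (a • p + b • q) ≤ ((a * f p + b * f q : ℝ) : EReal) := by
    intro p hp q hq a b ha hb hab
    have hb' : b = 1 - a := by linarith
    have h := hconv p q a ha (by linarith)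
    rw [← hcoe p hp, ← hcoe q hq] at h
    rw [hb']
    calc Fc (a • p + (1-a) • q) ≤ (a : EReal) * (f p : EReal) + ((1 - a : ℝ) : EReal) * (f q : EReal) := h
    _ = ((a * f p + (1-a) * f q : ℝ) : EReal) := by
        rw [← EReal.coe_mul, ← EReal.coe_mul, ← EReal.coe_add]
  have hmem : ∀ p ∈ s, ∀ q ∈ s, ∀ a b : ℝ, 0 ≤ a → 0 ≤ b → a + b = 1 →
      a • p + b • q ∈ s := by
    intro p hp q hq a b ha hb hab
    have := key p hp q hq a b ha hb hab
    exact fun htop => (EReal.coe_ne_top _) (top_le_iff.1 (htop ▸ this))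
  have hsConvex : Convex ℝ s := fun p hp q hq a b ha hb hab => hmem p hp q hq a b ha hb hab
  have hConvexOn : ConvexOn ℝ s f := by
    refine ⟨hsConvex, fun p hp q hq a b ha hb hab => ?_⟩
    have h := key p hp q hq a b ha hb hab
    have h2 := EReal.toReal_le_toReal h (hbot _) (EReal.coe_ne_top _)
    simp only [← EReal.coe_mul, ← EReal.coe_add, EReal.toReal_coe] at h2
    exact h2

  -- dimension reduction: replace V by the span of s - p₀
  set tset : Set V := (fun x => x - p₀) '' s with ht_def
  obtain ⟨bs, hbt, hspan, hli⟩ := exists_linearIndependent ℝ tset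
  have hfin : bs.Finite := hli.setFinite
  haveI : Fintype bs := hfin.fintype
  set W : Submodule ℝ V := Submodule.span ℝ (Set.range ((↑) : bs → V)) with hW_def
  have hWb : W = Submodule.span ℝ bs := by rw [hW_def, Subtype.range_coe]
  have hsW : ∀ p ∈ s, p - p₀ ∈ W := by
    intro p hp
    rw [hWb, hspan]
    exact Submodule.subset_span ⟨p, hp, rfl⟩
  set B : Module.Basis bs ℝ W := Module.Basis.span hli with hB_def
  obtain ⟨W', hcompl⟩ := Submodule.exists_isCompl W
  set π : V →ₗ[ℝ] W := W.linearProjOfIsCompl W' hcompl with hπ_def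
  have hπW : ∀ x : W, π (x : V) = x := fun x =>
    Submodule.linearProjOfIsCompl_apply_left hcompl x
  set A : V → V := fun p => p₀ + (π (p - p₀) : V) with hA_def
  have hAfix : ∀ p, p - p₀ ∈ W → A p = p := by
    intro p hp
    have h1 : π (p - p₀) = ⟨p - p₀, hp⟩ := hπW ⟨p - p₀, hp⟩
    have h2 : A p = p₀ + (π (p - p₀) : V) := rfl
    rw [h2, h1]
    show p₀ + (p - p₀) = p
    module
  have hAaff : ∀ (p q : V) (a : ℝ), A (a • p + (1 - a) • q) = a • A p + (1 - a) • A q := by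
    intro p q a
    have h1 : a • p + (1 - a) • q - p₀ = a • (p - p₀) + (1 - a) • (q - p₀) := by module
    simp only [hA_def, h1, map_add, map_smul, Submodule.coe_add, Submodule.coe_smul]
    module
  -- coordinates
  set c : bs → V → ℝ := fun i p => B.repr (π (p - p₀)) i with hc_def
  have hc_cont : ∀ i, Continuous (c i) := by
    intro i
    have h1 : (c i) = fun p => ((B.coord i).comp π) (p - p₀) := rfl
    rw [h1]
    exact (((B.coord i).comp π).continuous_of_finiteDimensional).comp
      (continuous_id.sub continuous_const)
  have hsum : ∀ p : V, (π (p - p₀) : V) = ∑ i : bs, c i p • (i : V) := by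
    intro p
    have h1 := congrArg (Subtype.val) (B.sum_repr (π (p - p₀)))
    rw [← h1, AddSubmonoidClass.coe_finset_sum]
    refine Finset.sum_congr rfl fun i _ => ?_
    rw [Submodule.coe_smul]
    congr 1
    exact congrArg Subtype.val (Module.Basis.span_apply hli i)
  -- the interior point xstar
  set n : ℕ := Fintype.card bs with hn_def
  set κ : ℝ := ((n : ℝ) + 1)⁻¹ with hκ_def
  have hκpos : 0 < κ := by positivity
  have hsumW : (∑ i : bs, (i : V)) ∈ W :=
    Submodule.sum_mem _ fun i _ => Submodule.subset_span ⟨i, rfl⟩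
  set xstar : V := p₀ + κ • ∑ i : bs, (i : V) with hxstar_def
  have hxs : xstar - p₀ = κ • ∑ i : bs, (i : V) := by rw [hxstar_def]; abel
  have hπx : π (xstar - p₀) = κ • (⟨∑ i : bs, (i : V), hsumW⟩ : W) := by
    rw [hxs]
    have := hπW ⟨∑ i : bs, (i : V), hsumW⟩
    rw [map_smul]
    rw [show ((⟨∑ i : bs, (i : V), hsumW⟩ : W) : V) = ∑ i : bs, (i : V) from rfl] at this
    rw [this]
  have hsubB : (⟨∑ i : bs, (i : V), hsumW⟩ : W) = ∑ j : bs, B j := by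
    apply Subtype.ext
    rw [AddSubmonoidClass.coe_finset_sum]
    exact Finset.sum_congr rfl fun j _ => (congrArg Subtype.val (Module.Basis.span_apply hli j)).symm
  have hcx : ∀ i, c i xstar = κ := by
    intro i
    rw [hc_def]
    simp only [hπx, hsubB, map_smul, map_sum, Finsupp.smul_apply, Finsupp.coe_finset_sum,
      Finset.sum_apply, Module.Basis.repr_self, smul_eq_mul]
    rw [Finset.sum_eq_single i (fun j _ hji => Finsupp.single_eq_of_ne' hji)
      (fun h => absurd (Finset.mem_univ i) h)]
    simp
  -- the open neighbourhood U
  set U : Set V := {p | (∀ i : bs, 0 < c i p) ∧ ∑ i : bs, c i p < 1} with hU_def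
  have hUopen : IsOpen U := by
    have h1 : IsOpen {p | ∀ i : bs, 0 < c i p} := by
      have h2 : {p | ∀ i : bs, 0 < c i p} = ⋂ i : bs, {p | 0 < c i p} := by ext; simp
      rw [h2]
      exact isOpen_iInter_of_finite fun i => isOpen_lt continuous_const (hc_cont i)
    exact h1.inter (isOpen_lt (continuous_finset_sum _ fun i _ => hc_cont i) continuous_const)
  have hxU : xstar ∈ U := by
    constructor
    · intro i; rw [hcx i]; exact hκpos
    · have h1 : ∑ i : bs, c i xstar = (n : ℝ) * κ := by
        rw [Finset.sum_congr rfl fun i _ => hcx i]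
        simp [hn_def, Finset.card_univ, nsmul_eq_mul]
      rw [h1, hκ_def]
      rw [mul_inv_lt_iff₀ (by positivity)]
      linarith
  -- center of mass representation of A on U
  set z : Option bs → V := fun o => o.elim p₀ (fun i => p₀ + (i : V)) with hz_def
  have hzs : ∀ o, z o ∈ s := by
    rintro (_ | i)
    · exact hp₀
    · obtain ⟨y, hy, hyi⟩ := hbt i.2
      have hyi' : y - p₀ = (i : V) := hyi
      have h5 : p₀ + (i : V) = y := by rw [← hyi']; module
      simpa [hz_def, h5] using hy
  set w : V → Option bs → ℝ := fun p o => o.elim (1 - ∑ i : bs, c i p) (fun i => c i p)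
    with hw_def
  have hwsum : ∀ p, ∑ o : Option bs, w p o = 1 := by
    intro p; rw [Fintype.sum_option]; simp [hw_def]
  have hAcm : ∀ p, A p = Finset.univ.centerMass (w p) z := by
    intro p
    rw [Finset.centerMass_eq_of_sum_1 _ _ (hwsum p), Fintype.sum_option]
    simp only [hz_def, hw_def, Option.elim]
    have e1 : ∑ i : bs, c i p • (p₀ + (i : V))
        = (∑ i : bs, c i p) • p₀ + ∑ i : bs, c i p • (i : V) := by
      simp [smul_add, Finset.sum_add_distrib, ← Finset.sum_smul]
    rw [e1]
    have e2 : A p = p₀ + (π (p - p₀) : V) := rfl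
    rw [e2, hsum p]
    module
  have hAU : ∀ p ∈ U, A p ∈ s := by
    intro p hp
    rw [hAcm p]
    refine hsConvex.centerMass_mem ?_ ?_ fun o _ => hzs o
    · rintro (_ | i) _
      · simp only [hw_def, Option.elim]; linarith [hp.2]
      · exact le_of_lt (hp.1 i)
    · rw [hwsum p]; norm_num
  have hne : (Finset.univ : Finset (Option bs)).Nonempty := ⟨none, Finset.mem_univ _⟩
  set C : ℝ := Finset.univ.sup' hne (f ∘ z) with hC_def
  have hbound : ∀ p ∈ U, f (A p) ≤ C := by
    intro p hp
    have hw0 : ∀ o ∈ (Finset.univ : Finset (Option bs)), 0 ≤ w p o := by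
      rintro (_ | i) _
      · simp only [hw_def, Option.elim]; linarith [hp.2]
      · exact le_of_lt (hp.1 i)
    have hw1 : 0 < ∑ o : Option bs, w p o := by rw [hwsum p]; norm_num
    have h1 := hConvexOn.map_centerMass_le hw0 hw1 (fun o _ => hzs o)
    rw [← hAcm p] at h1
    exact h1.trans (Finset.centerMass_le_sup hw0 hw1)
  have hgU : ∀ p ∈ U, Fc (A p) ≤ (C : EReal) := by
    intro p hp
    rw [← hcoe _ (hAU p hp)]
    exact_mod_cast hbound p hp
  -- the epigraph and its interior
  set Epi : Set (V × ℝ) := {q | Fc (A q.1) ≤ (q.2 : EReal)} with hEpi_def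
  have hEpiConv : Convex ℝ Epi := by
    rintro x hx y hy a b ha hb hab
    have hb' : b = 1 - a := by linarith
    simp only [hEpi_def, Set.mem_setOf_eq] at hx hy ⊢
    have h1 : (a • x + b • y).1 = a • x.1 + b • y.1 := rfl
    have h2 : (a • x + b • y).2 = a * x.2 + b * y.2 := rfl
    rw [h1, h2, hb', hAaff x.1 y.1 a]
    calc Fc (a • A x.1 + (1 - a) • A y.1)
        ≤ (a : EReal) * Fc (A x.1) + ((1 - a : ℝ) : EReal) * Fc (A y.1) :=
          hconv _ _ a ha (by linarith)
      _ ≤ (a : EReal) * (x.2 : EReal) + ((1 - a : ℝ) : EReal) * (y.2 : EReal) := by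
          refine add_le_add (mul_le_mul_of_nonneg_left hx ?_)
            (mul_le_mul_of_nonneg_left hy ?_)
          · exact EReal.coe_nonneg.2 ha
          · exact EReal.coe_nonneg.2 (by linarith)
      _ = ((a * x.2 + (1 - a) * y.2 : ℝ) : EReal) := by
          rw [← EReal.coe_mul, ← EReal.coe_mul, ← EReal.coe_add]

  have hsubEpi : U ×ˢ Set.Ioi C ⊆ Epi := by
    rintro ⟨p, r⟩ ⟨hp, hr⟩
    exact (hgU p hp).trans (by exact_mod_cast le_of_lt hr)
  have hxint : (xstar, C + 1) ∈ interior Epi :=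
    interior_maximal hsubEpi (hUopen.prod isOpen_Ioi) ⟨hxU, Set.mem_Ioi.2 (lt_add_one C)⟩
  set ρ : ℝ := f (A xstar) with hρ_def
  have hρC : ρ ≤ C := hbound xstar hxU
  have hgx : Fc (A xstar) = (ρ : EReal) := (hcoe _ (hAU xstar hxU)).symm
  have hxhat : (xstar, ρ - 1) ∉ Epi := by
    simp only [hEpi_def, Set.mem_setOf_eq, hgx, not_le]
    exact_mod_cast (by linarith : ρ - 1 < ρ)
  obtain ⟨φ, hφ⟩ := geometric_hahn_banach_open_point (hEpiConv.interior) isOpen_interior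
    (fun h => hxhat (interior_subset h))
  -- pass from the interior to all of Epi
  have hle : ∀ q ∈ Epi, φ q ≤ φ (xstar, ρ - 1) := by
    intro q hq
    by_contra hgt
    push_neg at hgt
    have hx₁ : φ (xstar, C + 1) < φ (xstar, ρ - 1) := hφ _ hxint
    set D1 : ℝ := φ q - φ (xstar, ρ - 1) with hD1
    set D2 : ℝ := φ q - φ (xstar, C + 1) with hD2
    have hD1pos : 0 < D1 := by simp [hD1]; linarith
    have hD2pos : 0 < D2 := by simp [hD2]; linarith
    set θ : ℝ := D1 / (2 * D2) with hθ_def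
    have hθpos : 0 < θ := by positivity
    have hθlt : θ ≤ 1 / 2 := by
      rw [hθ_def, div_le_div_iff₀ (by linarith) (by norm_num)]
      nlinarith
    have hmem2 : θ • ((xstar, C + 1) : V × ℝ) + (1 - θ) • q ∈ interior Epi := by
      have h3 := hEpiConv.combo_interior_self_subset_interior hθpos
        (by linarith : (0:ℝ) ≤ 1 - θ) (by ring)
      exact h3 (Set.add_mem_add (Set.smul_mem_smul_set hxint) (Set.smul_mem_smul_set hq))
    have h4 := hφ _ hmem2
    rw [map_add, map_smul, map_smul, smul_eq_mul, smul_eq_mul] at h4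
    have hθD2 : θ * D2 = D1 / 2 := by rw [hθ_def]; field_simp
    nlinarith [h4]
  -- decompose φ
  set β : ℝ := φ ((0 : V), (1 : ℝ)) with hβ_def
  set φ₁ : V →ₗ[ℝ] ℝ := (φ : V × ℝ →ₗ[ℝ] ℝ).comp (LinearMap.inl ℝ V ℝ) with hφ₁_def
  have hdec : ∀ (p : V) (r : ℝ), φ (p, r) = φ₁ p + r * β := by
    intro p r
    have h1 : ((p, r) : V × ℝ) = (p, 0) + r • ((0 : V), (1 : ℝ)) := by
      simp [Prod.ext_iff]
    rw [h1, map_add, map_smul, smul_eq_mul]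
    rfl
  have hβneg : β < 0 := by
    have h1 : φ (xstar, C + 1) < φ (xstar, ρ - 1) := hφ _ hxint
    rw [hdec, hdec] at h1
    nlinarith
  -- conclude
  refine ⟨(-β⁻¹) • φ₁, β⁻¹ * φ (xstar, ρ - 1), fun p => ?_⟩
  by_cases hp : p ∈ s
  · have hEp : (p, f p) ∈ Epi := by
      simp only [hEpi_def, Set.mem_setOf_eq]
      rw [hAfix p (hsW p hp), ← hcoe p hp]
    have h1 := hle _ hEp
    rw [hdec] at h1
    have h2 : ((-β⁻¹) • φ₁) p + β⁻¹ * φ (xstar, ρ - 1) ≤ f p := by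
      have h3 : (φ (xstar, ρ - 1) - φ₁ p) / β ≤ f p :=
        (div_le_iff_of_neg hβneg).2 (by linarith)
      have h4 : ((-β⁻¹) • φ₁) p + β⁻¹ * φ (xstar, ρ - 1)
          = (φ (xstar, ρ - 1) - φ₁ p) / β := by
        simp [LinearMap.smul_apply, smul_eq_mul]
        field_simp
        ring
      rw [h4]; exact h3
    calc ((((-β⁻¹) • φ₁) p + β⁻¹ * φ (xstar, ρ - 1) : ℝ) : EReal)
        ≤ ((f p : ℝ) : EReal) := by exact_mod_cast h2
      _ = Fc p := hcoe p hp
  · have : Fc p = ⊤ := not_not.1 hp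
    rw [this]
    exact le_top

end AffineMinorant

section Quad
attribute [local instance] Matrix.normedAddCommGroup Matrix.normedSpace

set_option maxHeartbeats 1000000 in
theorem quad_minorant (d : ℕ) (Fc : (Fin d → ℝ) × ↥(symMatrices d) → EReal)
    (hbot : ∀ p, Fc p ≠ ⊥)
    (hconv : ∀ p q : (Fin d → ℝ) × ↥(symMatrices d), ∀ θ : ℝ, 0 ≤ θ → θ ≤ 1 →
        Fc (θ • p + (1 - θ) • q) ≤ (θ : EReal) * Fc p + ((1 - θ : ℝ) : EReal) * Fc q)
    (hproper : ∃ p, Fc p ≠ ⊤) :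
    ∃ K₀ K₁ : ℝ, 0 ≤ K₁ ∧
      ∀ v : Fin d → ℝ, ((K₀ - K₁ * (1 + ∑ i, v i ^ 2) : ℝ) : EReal) ≤ Fc (v, outerSym v) := by
  obtain ⟨ℓ, c, hmin⟩ := exists_affine_minorant Fc hbot hconv hproper
  obtain ⟨K, hKpos, hKb⟩ := ContinuousLinearMap.bound (E := (Fin d → ℝ) × ↥(symMatrices d))
    (σ₁₂ := RingHom.id ℝ) ⟨ℓ, ℓ.continuous_of_finiteDimensional⟩
  have hK0 : 0 ≤ K := hKpos.le
  set L := ℓ with hL_def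
  refine ⟨c, K, hK0, fun v => ?_⟩
  refine le_trans ?_ (hmin (v, outerSym v))
  rw [EReal.coe_le_coe_iff]
  set R : ℝ := ∑ i, v i ^ 2 with hR_def
  have hR0 : 0 ≤ R := Finset.sum_nonneg fun i _ => sq_nonneg _
  have hsingle : ∀ i, v i ^ 2 ≤ R := fun i =>
    Finset.single_le_sum (fun j _ => sq_nonneg (v j)) (Finset.mem_univ i)
  have hnv : ‖v‖ ≤ 1 + R := by
    rw [pi_norm_le_iff_of_nonneg (by linarith)]
    intro i
    rw [Real.norm_eq_abs]
    nlinarith [sq_abs (v i), sq_nonneg (|v i| - 1), hsingle i, abs_nonneg (v i)]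
  have hnM : ‖outerSym v‖ ≤ 1 + R := by
    have h1 : ‖outerSym v‖ = ‖Matrix.vecMulVec v v‖ := rfl
    rw [h1, Matrix.norm_le_iff (by linarith)]
    intro i j
    have h2 : Matrix.vecMulVec v v i j = v i * v j := Matrix.vecMulVec_apply _ _ _ _
    rw [h2, Real.norm_eq_abs, abs_mul]
    nlinarith [sq_abs (v i), sq_abs (v j), sq_nonneg (|v i| - |v j|), hsingle i, hsingle j,
      abs_nonneg (v i), abs_nonneg (v j)]
  have hnorm : ‖((v, outerSym v) : (Fin d → ℝ) × ↥(symMatrices d))‖ ≤ 1 + R := by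
    rw [Prod.norm_def]
    exact max_le hnv hnM
  have h3 : |L (v, outerSym v)| ≤ K * (1 + R) := by
    calc |L (v, outerSym v)| ≤ K * ‖((v, outerSym v) : (Fin d → ℝ) × ↥(symMatrices d))‖ :=
      hKb _
    _ ≤ K * (1 + R) := by
        nlinarith [hK0]
  have h4 : ℓ (v, outerSym v) = L (v, outerSym v) := rfl
  rw [abs_le] at h3
  linarith [h3.1, h4 ▸ h3.1]
end Quad

set_option maxHeartbeats 1000000 in
/-- **Lower semicontinuity in finite dimensions.**
A diconvex mapping `F : ℝ^d → ℝ ∪ {+∞}` (i.e. one admitting a proper convex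
representative `F̌ : ℝ^d × Sym_d(ℝ) → ℝ ∪ {+∞}` with `F̌ (u, u uᵀ) = F u`) is lower
semicontinuous if and only if it admits such a representative which is moreover lower
semicontinuous. -/
theorem diconvex_lsc_iff_exists_lsc_representative
    (d : ℕ) (F : (Fin d → ℝ) → EReal) (hFbot : ∀ u, F u ≠ ⊥)
    (hdiconvex : ∃ Fc : (Fin d → ℝ) × ↥(symMatrices d) → EReal,
      (∀ p, Fc p ≠ ⊥) ∧ (∃ p, Fc p ≠ ⊤) ∧
      (∀ p q : (Fin d → ℝ) × ↥(symMatrices d), ∀ θ : ℝ, 0 ≤ θ → θ ≤ 1 →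
        Fc (θ • p + (1 - θ) • q) ≤ (θ : EReal) * Fc p + ((1 - θ : ℝ) : EReal) * Fc q) ∧
      (∀ u : Fin d → ℝ, Fc (u, outerSym u) = F u)) :
    LowerSemicontinuous F ↔
    (∃ Fc : (Fin d → ℝ) × ↥(symMatrices d) → EReal,
      (∀ p, Fc p ≠ ⊥) ∧ (∃ p, Fc p ≠ ⊤) ∧
      (∀ p q : (Fin d → ℝ) × ↥(symMatrices d), ∀ θ : ℝ, 0 ≤ θ → θ ≤ 1 →
        Fc (θ • p + (1 - θ) • q) ≤ (θ : EReal) * Fc p + ((1 - θ : ℝ) : EReal) * Fc q) ∧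
      (∀ u : Fin d → ℝ, Fc (u, outerSym u) = F u) ∧
      LowerSemicontinuous Fc) := by
  classical
  obtain ⟨Fc, hFcbot, hFcproper, hFcconv, hFcrep⟩ := hdiconvex
  constructor
  · intro hF
    -- the trace functional
    set τ : ((Fin d → ℝ) × ↥(symMatrices d)) →ₗ[ℝ] ℝ :=
      (Matrix.traceLinearMap (Fin d) ℝ ℝ).comp
        (((symMatrices d).subtype).comp (LinearMap.snd ℝ (Fin d → ℝ) ↥(symMatrices d)))
      with hτ_def
    have hτ : ∀ p : (Fin d → ℝ) × ↥(symMatrices d),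
        τ p = Matrix.trace ((p.2 : Matrix (Fin d) (Fin d) ℝ)) := fun p => rfl
    have hτdiag : ∀ v : Fin d → ℝ, τ (v, outerSym v) = ∑ i, v i ^ 2 := by
      intro v
      rw [hτ]
      simp [outerSym, Matrix.trace, Matrix.diag, Matrix.vecMulVec_apply, sq]
    by_cases hFtop : ∀ u, F u = ⊤
    · -- `F ≡ ⊤`: use the indicator of a closed convex set avoiding the diagonal
      rcases Nat.eq_zero_or_pos d with hd | hd
      · -- d = 0 is impossible: the representative would be identically ⊤
        exfalso
        subst hd
        obtain ⟨p, hp⟩ := hFcproper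
        apply hp
        have h1 : p = (p.1, outerSym p.1) := by
          refine Prod.ext rfl (Subtype.ext ?_)
          ext i j
          exact i.elim0
        rw [h1, hFcrep, hFtop]
      set Fc' : (Fin d → ℝ) × ↥(symMatrices d) → EReal :=
        fun p => if τ p ≤ -1 then (0 : EReal) else ⊤ with hFc'_def
      have hval : ∀ p, Fc' p = 0 ∨ Fc' p = ⊤ := by
        intro p; by_cases h : τ p ≤ -1 <;> simp [hFc'_def, h]
      have hvnb : ∀ (a : ℝ) (p), 0 ≤ a → (a : EReal) * Fc' p ≠ ⊥ := by
        intro a p ha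
        rcases eq_or_lt_of_le ha with ha' | ha'
        · rw [← ha']; simp
        · rcases hval p with h | h <;> rw [h]
          · simp
          · rw [EReal.coe_mul_top_of_pos ha']; simp
      refine ⟨Fc', ?_, ?_, ?_, ?_, ?_⟩
      · intro p; rcases hval p with h | h <;> simp [h]
      · have hmem : (-1 : Matrix (Fin d) (Fin d) ℝ) ∈ symMatrices d := by
          show Matrix.IsSymm _
          simp [Matrix.IsSymm]
        refine ⟨((0 : Fin d → ℝ), ⟨-1, hmem⟩), ?_⟩
        have h1 : τ ((0 : Fin d → ℝ), ⟨-1, hmem⟩) = -(d : ℝ) := by rw [hτ]; simp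
        have hd1 : (1 : ℝ) ≤ d := by exact_mod_cast hd
        have h2 : τ ((0 : Fin d → ℝ), ⟨-1, hmem⟩) ≤ -1 := by rw [h1]; linarith
        simp [hFc'_def, h2]
      · intro p q θ h0 h1
        rcases eq_or_lt_of_le h0 with h0' | h0'
        · rw [← h0']
          norm_num
        rcases eq_or_lt_of_le h1 with h1' | h1'
        · rw [h1']
          norm_num
        by_cases hp : τ p ≤ -1
        · by_cases hq : τ q ≤ -1
          · have hcombo : τ (θ • p + (1 - θ) • q) ≤ -1 := by
              rw [map_add, map_smul, map_smul, smul_eq_mul, smul_eq_mul]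
              nlinarith
            have e1 : Fc' (θ • p + (1 - θ) • q) = 0 := if_pos hcombo
            have e2 : Fc' p = 0 := if_pos hp
            have e3 : Fc' q = 0 := if_pos hq
            rw [e1, e2, e3, mul_zero, mul_zero, add_zero]
          · have e1 : ((1 - θ : ℝ) : EReal) * Fc' q = ⊤ := by
              have e2 : Fc' q = ⊤ := if_neg hq
              rw [e2]
              exact EReal.coe_mul_top_of_pos (by linarith)
            rw [e1, EReal.add_top_of_ne_bot (hvnb θ p h0)]
            exact le_top
        · have e1 : (θ : EReal) * Fc' p = ⊤ := by
            have e2 : Fc' p = ⊤ := if_neg hp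
            rw [e2]
            exact EReal.coe_mul_top_of_pos h0'
          rw [e1, EReal.top_add_of_ne_bot (hvnb (1 - θ) q (by linarith))]
          exact le_top
      · intro u
        have hsum0 : (0 : ℝ) ≤ ∑ i, u i ^ 2 := Finset.sum_nonneg fun i _ => sq_nonneg _
        have h2 : ¬ τ (u, outerSym u) ≤ -1 := by rw [hτdiag u]; linarith
        rw [hFtop u]
        exact if_neg h2
      · intro p y hy
        by_cases hp : τ p ≤ -1
        · have e1 : Fc' p = 0 := if_pos hp
          rw [e1] at hy
          filter_upwards with v
          exact lt_of_lt_of_le hy (by rcases hval v with h | h <;> simp [h])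
        · have hopen : IsOpen {q : (Fin d → ℝ) × ↥(symMatrices d) | ¬ τ q ≤ -1} := by
            have e2 : {q : (Fin d → ℝ) × ↥(symMatrices d) | ¬ τ q ≤ -1}
                = τ ⁻¹' (Set.Ioi (-1)) := by
              ext q; simp [not_le]
            rw [e2]
            exact isOpen_Ioi.preimage τ.continuous_of_finiteDimensional
          have e1 : Fc' p = ⊤ := if_neg hp
          rw [e1] at hy
          filter_upwards [hopen.mem_nhds hp] with v hv
          rw [hFc'_def]
          simp only [if_neg hv]
          exact hy
    · -- main case : the supremum of affine diagonal minorants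
      push_neg at hFtop
      obtain ⟨u₀, hu₀⟩ := hFtop
      obtain ⟨K₀, K₁, hK₁, hquad⟩ := quad_minorant d Fc hFcbot hFcconv hFcproper
      have hquadF : ∀ v : Fin d → ℝ,
          ((K₀ - K₁ * (1 + ∑ i, v i ^ 2) : ℝ) : EReal) ≤ F v := by
        intro v; rw [← hFcrep v]; exact hquad v
      set SS := {ac : (((Fin d → ℝ) × ↥(symMatrices d)) →ₗ[ℝ] ℝ) × ℝ //
        ∀ v : Fin d → ℝ, ((ac.1 (v, outerSym v) + ac.2 : ℝ) : EReal) ≤ F v} with hSS_def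
      have hmem₀ : ∀ v : Fin d → ℝ,
          ((((-K₁) • τ) (v, outerSym v) + (K₀ - K₁) : ℝ) : EReal) ≤ F v := by
        intro v
        have h1 : ((-K₁) • τ) (v, outerSym v) + (K₀ - K₁)
            = K₀ - K₁ * (1 + ∑ i, v i ^ 2) := by
          rw [LinearMap.smul_apply, smul_eq_mul, hτdiag v]; ring
        rw [h1]; exact hquadF v
      set a₀ : SS := ⟨((-K₁) • τ, K₀ - K₁), hmem₀⟩ with ha₀_def
      set G : (Fin d → ℝ) × ↥(symMatrices d) → EReal :=
        fun p => ⨆ a : SS, ((a.1.1 p + a.1.2 : ℝ) : EReal) with hG_def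
      have hGbot : ∀ p, G p ≠ ⊥ := by
        intro p
        have h1 : (((a₀.1.1 p + a₀.1.2 : ℝ)) : EReal) ≤ G p :=
          le_iSup (fun a : SS => ((a.1.1 p + a.1.2 : ℝ) : EReal)) a₀
        intro h
        rw [h] at h1
        exact (EReal.coe_ne_bot _) (le_bot_iff.1 h1)
      have hGdiag_le : ∀ u, G (u, outerSym u) ≤ F u := fun u => iSup_le fun a => a.2 u
      have hGconv : ∀ p q : (Fin d → ℝ) × ↥(symMatrices d), ∀ θ : ℝ, 0 ≤ θ → θ ≤ 1 →
          G (θ • p + (1 - θ) • q) ≤ (θ : EReal) * G p + ((1 - θ : ℝ) : EReal) * G q := by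
        intro p q θ h0 h1
        refine iSup_le fun a => ?_
        have h2 : a.1.1 (θ • p + (1 - θ) • q) + a.1.2
            = θ * (a.1.1 p + a.1.2) + (1 - θ) * (a.1.1 q + a.1.2) := by
          rw [map_add, map_smul, map_smul, smul_eq_mul, smul_eq_mul]; ring
        rw [h2, EReal.coe_add, EReal.coe_mul, EReal.coe_mul]
        exact add_le_add
          (mul_le_mul_of_nonneg_left
            (le_iSup (fun a : SS => ((a.1.1 p + a.1.2 : ℝ) : EReal)) a)
            (EReal.coe_nonneg.2 h0))
          (mul_le_mul_of_nonneg_left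
            (le_iSup (fun a : SS => ((a.1.1 q + a.1.2 : ℝ) : EReal)) a)
            (EReal.coe_nonneg.2 (by linarith)))
      have hGlsc : LowerSemicontinuous G := by
        apply lowerSemicontinuous_iSup
        intro a
        exact (continuous_coe_real_ereal.comp
          ((a.1.1.continuous_of_finiteDimensional).add continuous_const)).lowerSemicontinuous
      have hGdiag_ge : ∀ u, F u ≤ G (u, outerSym u) := by
        intro u
        by_contra hlt
        push_neg at hlt
        obtain ⟨t, hGt, htF⟩ := EReal.exists_between_coe_real hlt
        obtain ⟨ε, hε, hball⟩ := Metric.eventually_nhds_iff.1 (hF u (t : EReal) htF)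
        set SU : ℝ := ∑ i, u i ^ 2 with hSU_def
        set lam : ℝ := 2 * K₁ + (max 0 (t - K₀ + K₁ + 2 * K₁ * SU)) / ε ^ 2 with hlam_def
        have hmax0 : 0 ≤ max 0 (t - K₀ + K₁ + 2 * K₁ * SU) := le_max_left _ _
        have hlam0 : 0 ≤ lam := by
          rw [hlam_def]
          have : 0 ≤ (max 0 (t - K₀ + K₁ + 2 * K₁ * SU)) / ε ^ 2 := by positivity
          linarith
        set ip : ((Fin d → ℝ) × ↥(symMatrices d)) →ₗ[ℝ] ℝ :=
          { toFun := fun p => ∑ i, u i * p.1 i,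
            map_add' := by
              intro p q
              simp [mul_add, Finset.sum_add_distrib]
            map_smul' := by
              intro r p
              simp only [Prod.smul_fst, Pi.smul_apply, smul_eq_mul, RingHom.id_apply,
                Finset.mul_sum]
              exact Finset.sum_congr rfl fun i _ => by ring } with hip_def
        set aLin := (2 * lam) • ip + (-lam) • τ with haLin_def
        set aC : ℝ := t - lam * SU with haC_def
        have hdiagval : ∀ v : Fin d → ℝ,
            aLin (v, outerSym v) + aC = t - lam * ∑ i, (v i - u i) ^ 2 := by
          intro v
          have h1 : ip (v, outerSym v) = ∑ i, u i * v i := rfl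
          have h3 : ∑ i, (v i - u i) ^ 2
              = ∑ i, v i ^ 2 - 2 * ∑ i, (u i * v i) + SU := by
            rw [hSU_def]
            have h4 : ∀ i ∈ Finset.univ, (v i - u i) ^ 2
                = (v i ^ 2 - 2 * (u i * v i)) + u i ^ 2 := fun i _ => by ring
            rw [Finset.sum_congr rfl h4, Finset.sum_add_distrib, Finset.sum_sub_distrib,
              Finset.mul_sum]
          have h5 : aLin (v, outerSym v)
              = 2 * lam * (∑ i, u i * v i) + (-lam) * (∑ i, v i ^ 2) := by
            rw [haLin_def, LinearMap.add_apply, LinearMap.smul_apply, LinearMap.smul_apply,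
              smul_eq_mul, smul_eq_mul, h1, hτdiag v]
          rw [h5, haC_def, h3]
          ring
        have hmem : ∀ v : Fin d → ℝ, ((aLin (v, outerSym v) + aC : ℝ) : EReal) ≤ F v := by
          intro v
          rw [hdiagval v]
          set D : ℝ := ∑ i, (v i - u i) ^ 2 with hD_def
          have hD0 : 0 ≤ D := Finset.sum_nonneg fun i _ => sq_nonneg _
          by_cases hcase : D < ε ^ 2
          · have hdist : dist v u < ε := by
              rw [dist_pi_lt_iff hε]
              intro i
              rw [Real.dist_eq]
              have h5 : (v i - u i) ^ 2 ≤ D :=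
                Finset.single_le_sum (fun j _ => sq_nonneg (v j - u j)) (Finset.mem_univ i)
              nlinarith [abs_nonneg (v i - u i), sq_abs (v i - u i)]
            have h6 := hball hdist
            have h7 : ((t - lam * D : ℝ) : EReal) ≤ (t : EReal) :=
              EReal.coe_le_coe_iff.2 (by nlinarith)
            exact h7.trans h6.le
          · push_neg at hcase
            refine le_trans ?_ (hquadF v)
            rw [EReal.coe_le_coe_iff]
            have hRv : ∑ i, v i ^ 2 ≤ 2 * D + 2 * SU := by
              have h8 : ∀ i ∈ Finset.univ, v i ^ 2
                  ≤ 2 * (v i - u i) ^ 2 + 2 * u i ^ 2 := fun i _ => by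
                nlinarith [sq_nonneg (v i - u i - u i)]
              calc ∑ i, v i ^ 2 ≤ ∑ i, (2 * (v i - u i) ^ 2 + 2 * u i ^ 2) :=
                    Finset.sum_le_sum h8
                _ = 2 * D + 2 * SU := by
                    rw [Finset.sum_add_distrib, hD_def, hSU_def, ← Finset.mul_sum,
                      ← Finset.mul_sum]
            have hdiv : max 0 (t - K₀ + K₁ + 2 * K₁ * SU)
                ≤ (max 0 (t - K₀ + K₁ + 2 * K₁ * SU) / ε ^ 2) * D := by
              rw [div_mul_eq_mul_div, le_div_iff₀ (by positivity)]
              nlinarith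
            have hlamD : lam * D
                = 2 * K₁ * D + (max 0 (t - K₀ + K₁ + 2 * K₁ * SU) / ε ^ 2) * D := by
              rw [hlam_def]; ring
            have hXM : t - K₀ + K₁ + 2 * K₁ * SU
                ≤ (max 0 (t - K₀ + K₁ + 2 * K₁ * SU) / ε ^ 2) * D :=
              le_trans (le_max_right _ _) hdiv
            have hprod : K₁ * (∑ i, v i ^ 2) ≤ K₁ * (2 * D + 2 * SU) :=
              mul_le_mul_of_nonneg_left hRv hK₁
            have hK₁D : 0 ≤ K₁ * D := mul_nonneg hK₁ hD0
            have e9 : lam * D - 2 * K₁ * D = (max 0 (t - K₀ + K₁ + 2 * K₁ * SU) / ε ^ 2) * D := by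
              rw [hlam_def]; ring
            clear_value lam D SU
            linarith [e9, hXM, hprod, hK₁D]
        have hfin : ((aLin (u, outerSym u) + aC : ℝ) : EReal) ≤ G (u, outerSym u) :=
          le_iSup (fun a : SS => ((a.1.1 (u, outerSym u) + a.1.2 : ℝ) : EReal))
            (⟨(aLin, aC), hmem⟩ : SS)
        have hvalu : aLin (u, outerSym u) + aC = t := by
          rw [hdiagval u]
          simp
        rw [hvalu] at hfin
        exact absurd hfin (not_le.2 hGt)
      exact ⟨G, hGbot, ⟨(u₀, outerSym u₀), fun h => hu₀ (top_le_iff.1 (h ▸ hGdiag_le u₀))⟩,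
        hGconv, fun u => le_antisymm (hGdiag_le u) (hGdiag_ge u), hGlsc⟩
  · rintro ⟨Fc', _, _, _, hrep, hlsc⟩
    have hFeq : F = fun u => Fc' (u, outerSym u) := funext fun u => (hrep u).symm
    rw [hFeq]
    exact LowerSemicontinuous.comp hlsc (continuous_id.prodMk (Continuous.subtype_mk
      (continuous_matrix fun i j => ((continuous_apply i).mul (continuous_apply j))) _))
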